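/- Let n ≥ 1. Every sequence (K_i) of nonempty compact convex subsets of Sⁿ has a subsequence that converges in the Hausdorff distance, and the limit of this subsequence is a nonempty compact convex subset of Sⁿ. (The selection and convexity part of Theorem 2.8 of the paper.) -/

import Mathlib

open scoped RealInnerProductSpace

noncomputable section

/-- `Esp n` is `ℝ^{n+1}` with its standard inner product. -/
abbrev Esp (n : ℕ) : Type := EuclideanSpace ℝ (Fin (n + 1))

/-- The unit sphere `Sⁿ ⊆ ℝ^{n+1}`. -/
def sphereSet (n : ℕ) : Set (Esp n) := {x | ‖x‖ = 1}

/-- A convex segment in `Sⁿ`: `{(cos t)·u + (sin t)·v : 0 ≤ t ≤ a}` for an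
orthonormal pair `u, v` and some `a ∈ [0, π]`. -/
def IsConvexSegment {n : ℕ} (S : Set (Esp n)) : Prop :=
  ∃ (u v : Esp n) (a : ℝ), ‖u‖ = 1 ∧ ‖v‖ = 1 ∧ ⟪u, v⟫ = 0 ∧
    0 ≤ a ∧ a ≤ Real.pi ∧
    S = (fun t : ℝ => Real.cos t • u + Real.sin t • v) '' Set.Icc 0 a

/-- A subset of `Sⁿ` is convex if any two of its points are contained in a
convex segment contained in the set. -/
def SphConvex {n : ℕ} (A : Set (Esp n)) : Prop :=
  ∀ x ∈ A, ∀ y ∈ A, ∃ S : Set (Esp n), IsConvexSegment S ∧ S ⊆ A ∧ x ∈ S ∧ y ∈ S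

/-- Convergence of a sequence of subsets of `Sⁿ` in the Hausdorff distance. -/
def HConv {n : ℕ} (K : ℕ → Set (Esp n)) (L : Set (Esp n)) : Prop :=
  Filter.Tendsto (fun i => Metric.hausdorffDist (K i) L) Filter.atTop (nhds 0)

open Metric Set Filter Topology TopologicalSpace

/-- The segment parametrization. -/
def fseg {n : ℕ} (u v : Esp n) (t : ℝ) : Esp n := Real.cos t • u + Real.sin t • v

lemma fseg_tendsto {n : ℕ} {u v : Esp n} {U V : ℕ → Esp n} {T : ℕ → ℝ} {t : ℝ}
    (hU : Tendsto U atTop (𝓝 u)) (hV : Tendsto V atTop (𝓝 v))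
    (hT : Tendsto T atTop (𝓝 t)) :
    Tendsto (fun i => fseg (U i) (V i) (T i)) atTop (𝓝 (fseg u v t)) :=
  (((Real.continuous_cos.tendsto t).comp hT).smul hU).add
    (((Real.continuous_sin.tendsto t).comp hT).smul hV)

/-- Hausdorff limits of compact convex subsets are convex. -/
lemma sphConvex_of_hausdorff_limit {n : ℕ} (K : ℕ → Set (Esp n))
    (hne : ∀ i, (K i).Nonempty) (hcpt : ∀ i, IsCompact (K i))
    (hc : ∀ i, SphConvex (K i)) (L : Set (Esp n)) (hLne : L.Nonempty)
    (hLc : IsCompact L)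
    (h : Tendsto (fun i => hausdorffDist (K i) L) atTop (𝓝 0)) :
    SphConvex L := by
  have hfin : ∀ i, EMetric.hausdorffEdist (K i) L ≠ ⊤ := fun i =>
    hausdorffEdist_ne_top_of_nonempty_of_bounded (hne i) hLne (hcpt i).isBounded hLc.isBounded
  -- (b) limits of selections belong to L (along any subsequence)
  have hb : ∀ (ψ : ℕ → ℕ), StrictMono ψ → ∀ (Z : ℕ → Esp n), (∀ i, Z i ∈ K (ψ i)) →
      ∀ z, Tendsto Z atTop (𝓝 z) → z ∈ L := by
    intro ψ hψ Z hZ z hz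
    have h0 : infDist z L ≤ 0 := by
      have h1 : Tendsto (fun i => dist z (Z i) + hausdorffDist (K (ψ i)) L) atTop (𝓝 0) := by
        have := (tendsto_iff_dist_tendsto_zero.1 hz).add (h.comp hψ.tendsto_atTop)
        simpa [dist_comm] using this
      refine ge_of_tendsto h1 (Eventually.of_forall fun i => ?_)
      calc infDist z L ≤ infDist (Z i) L + dist z (Z i) := infDist_le_infDist_add_dist
        _ ≤ dist z (Z i) + hausdorffDist (K (ψ i)) L := by
            have := infDist_le_hausdorffDist_of_mem (hZ i) (hfin (ψ i))
            linarith
    have : infDist z L = 0 := le_antisymm h0 infDist_nonneg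
    exact (hLc.isClosed.mem_iff_infDist_zero hLne).2 this
  -- (a) points of L are approximated by points of K i
  have ha : ∀ x ∈ L, ∃ X : ℕ → Esp n, (∀ i, X i ∈ K i) ∧ Tendsto X atTop (𝓝 x) := by
    intro x hx
    have hch : ∀ i, ∃ y ∈ K i, infDist x (K i) = dist x y := fun i =>
      (hcpt i).exists_infDist_eq_dist (hne i) x
    choose X hX1 hX2 using hch
    refine ⟨X, hX1, tendsto_iff_dist_tendsto_zero.2 ?_⟩
    have hle : ∀ i, dist (X i) x ≤ hausdorffDist (K i) L := by
      intro i
      rw [dist_comm, ← hX2 i]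
      have hfin' : EMetric.hausdorffEdist L (K i) ≠ ⊤ := by
        show hausdorffEDist L (K i) ≠ ⊤
        rw [hausdorffEDist_comm]; exact hfin i
      have := infDist_le_hausdorffDist_of_mem hx hfin'
      rwa [hausdorffDist_comm] at this
    exact squeeze_zero (fun i => dist_nonneg) hle h
  intro x hx y hy
  obtain ⟨X, hX, hXlim⟩ := ha x hx
  obtain ⟨Y, hY, hYlim⟩ := ha y hy
  have H : ∀ i, ∃ u v : Esp n, ∃ a s t : ℝ, ‖u‖ = 1 ∧ ‖v‖ = 1 ∧ ⟪u, v⟫ = 0 ∧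
      0 ≤ a ∧ a ≤ Real.pi ∧ s ∈ Icc (0:ℝ) a ∧ t ∈ Icc (0:ℝ) a ∧
      fseg u v s = X i ∧ fseg u v t = Y i ∧ (fun r => fseg u v r) '' Icc 0 a ⊆ K i := by
    intro i
    obtain ⟨S, ⟨u, v, a, h1, h2, h3, h4, h5, hS⟩, hSK, hxS, hyS⟩ := hc i (X i) (hX i) (Y i) (hY i)
    subst hS
    obtain ⟨s, hs, hsx⟩ := hxS
    obtain ⟨t, ht, hty⟩ := hyS
    exact ⟨u, v, a, s, t, h1, h2, h3, h4, h5, hs, ht, hsx, hty, hSK⟩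
  choose u v a s t h1 h2 h3 h4 h5 h6 h7 h8 h9 h10 using H
  -- compactness extraction
  set C : Set (Esp n × Esp n × ℝ × ℝ × ℝ) :=
    (sphere 0 1) ×ˢ (sphere 0 1) ×ˢ (Icc 0 Real.pi) ×ˢ (Icc 0 Real.pi) ×ˢ (Icc 0 Real.pi) with hC
  have hCc : IsCompact C := ((isCompact_sphere _ _).prod ((isCompact_sphere _ _).prod
    (isCompact_Icc.prod (isCompact_Icc.prod isCompact_Icc))))
  have hqC : ∀ i, (u i, v i, a i, s i, t i) ∈ C := by
    intro i
    refine ⟨?_, ?_, ⟨h4 i, h5 i⟩, ⟨(h6 i).1, le_trans (h6 i).2 (h5 i)⟩,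
      ⟨(h7 i).1, le_trans (h7 i).2 (h5 i)⟩⟩
    · simpa [mem_sphere_zero_iff_norm] using h1 i
    · simpa [mem_sphere_zero_iff_norm] using h2 i
  obtain ⟨p, hpC, ψ, hψ, hq⟩ := hCc.tendsto_subseq hqC
  obtain ⟨u0, v0, a0, s0, t0⟩ := p
  have hu : Tendsto (fun i => u (ψ i)) atTop (𝓝 u0) := (continuous_fst.tendsto _).comp hq
  have hv : Tendsto (fun i => v (ψ i)) atTop (𝓝 v0) :=
    (continuous_fst.tendsto _).comp ((continuous_snd.tendsto _).comp hq)
  have haa : Tendsto (fun i => a (ψ i)) atTop (𝓝 a0) :=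
    (continuous_fst.tendsto _).comp ((continuous_snd.tendsto _).comp
      ((continuous_snd.tendsto _).comp hq))
  have hss : Tendsto (fun i => s (ψ i)) atTop (𝓝 s0) :=
    (continuous_fst.tendsto _).comp ((continuous_snd.tendsto _).comp
      ((continuous_snd.tendsto _).comp ((continuous_snd.tendsto _).comp hq)))
  have htt : Tendsto (fun i => t (ψ i)) atTop (𝓝 t0) :=
    (continuous_snd.tendsto _).comp ((continuous_snd.tendsto _).comp
      ((continuous_snd.tendsto _).comp ((continuous_snd.tendsto _).comp hq)))
  have hu0 : ‖u0‖ = 1 := by simpa [mem_sphere_zero_iff_norm] using hpC.1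
  have hv0 : ‖v0‖ = 1 := by simpa [mem_sphere_zero_iff_norm] using hpC.2.1
  have ha0 : a0 ∈ Icc (0:ℝ) Real.pi := hpC.2.2.1
  have hs0 : s0 ∈ Icc (0:ℝ) Real.pi := hpC.2.2.2.1
  have ht0 : t0 ∈ Icc (0:ℝ) Real.pi := hpC.2.2.2.2
  have hs0a : s0 ≤ a0 := le_of_tendsto_of_tendsto' hss haa fun i => (h6 (ψ i)).2
  have ht0a : t0 ≤ a0 := le_of_tendsto_of_tendsto' htt haa fun i => (h7 (ψ i)).2
  have huv0 : ⟪u0, v0⟫ = 0 := by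
    have hinner : Tendsto (fun i => ⟪u (ψ i), v (ψ i)⟫) atTop (𝓝 ⟪u0, v0⟫) := hu.inner hv
    have heq : (fun i => ⟪u (ψ i), v (ψ i)⟫) = fun _ => (0:ℝ) := funext fun i => h3 (ψ i)
    rw [heq] at hinner
    exact tendsto_nhds_unique hinner tendsto_const_nhds
  refine ⟨(fun r => fseg u0 v0 r) '' Icc 0 a0,
    ⟨u0, v0, a0, hu0, hv0, huv0, ha0.1, ha0.2, rfl⟩, ?_, ?_, ?_⟩
  · -- image ⊆ L
    rintro z ⟨r, hr, rfl⟩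
    refine hb ψ hψ (fun i => fseg (u (ψ i)) (v (ψ i)) (min r (a (ψ i)))) (fun i => ?_) _ ?_
    · exact h10 (ψ i) ⟨min r (a (ψ i)), ⟨le_min hr.1 (h4 (ψ i)), min_le_right _ _⟩, rfl⟩
    · have : Tendsto (fun i => min r (a (ψ i))) atTop (𝓝 (min r a0)) :=
        tendsto_const_nhds.min haa
      rw [min_eq_left hr.2] at this
      exact fseg_tendsto hu hv this
  · -- x ∈ image
    refine ⟨s0, ⟨hs0.1, hs0a⟩, ?_⟩
    have hxl : Tendsto (fun i => fseg (u (ψ i)) (v (ψ i)) (s (ψ i))) atTop (𝓝 x) := by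
      have : Tendsto (fun i => X (ψ i)) atTop (𝓝 x) := hXlim.comp hψ.tendsto_atTop
      simpa [fun i => h8 (ψ i)] using this
    exact tendsto_nhds_unique (fseg_tendsto hu hv hss) hxl
  · refine ⟨t0, ⟨ht0.1, ht0a⟩, ?_⟩
    have hyl : Tendsto (fun i => fseg (u (ψ i)) (v (ψ i)) (t (ψ i))) atTop (𝓝 y) := by
      have : Tendsto (fun i => Y (ψ i)) atTop (𝓝 y) := hYlim.comp hψ.tendsto_atTop
      simpa [fun i => h9 (ψ i)] using this
    exact tendsto_nhds_unique (fseg_tendsto hu hv htt) hyl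

/-- Theorem 2.8 (selection): every sequence of nonempty compact convex subsets
of `Sⁿ` has a subsequence converging in the Hausdorff distance, and the limit
is a nonempty compact convex subset of `Sⁿ`. -/
theorem sphConvex_selection (n : ℕ) (hn : 1 ≤ n) (K : ℕ → Set (Esp n))
    (hne : ∀ i, (K i).Nonempty) (hcpt : ∀ i, IsCompact (K i))
    (hsub : ∀ i, K i ⊆ sphereSet n) (hc : ∀ i, SphConvex (K i)) :
    ∃ φ : ℕ → ℕ, StrictMono φ ∧ ∃ L : Set (Esp n),
      L.Nonempty ∧ IsCompact L ∧ L ⊆ sphereSet n ∧ SphConvex L ∧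
      HConv (fun i => K (φ i)) L := by
  have hset : sphereSet n = (Metric.sphere (0 : Esp n) 1 : Set (Esp n)) := by
    ext x; simp [sphereSet, mem_sphere_zero_iff_norm]
  set X := Metric.sphere (0 : Esp n) 1
  have hrange : range (Subtype.val : X → Esp n) = (X : Set (Esp n)) := Subtype.range_coe
  have hsub' : ∀ i, K i ⊆ range (Subtype.val : X → Esp n) := by
    intro i; rw [hrange]; exact hset ▸ hsub i
  -- the sets as nonempty compacts of the sphere
  have hKc : ∀ i, IsCompact ((Subtype.val : X → Esp n) ⁻¹' K i) := fun i =>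
    ((hcpt i).isClosed.preimage continuous_subtype_val).isCompact
  have himg : ∀ i, (Subtype.val : X → Esp n) '' (Subtype.val ⁻¹' K i) = K i := fun i =>
    image_preimage_eq_of_subset (hsub' i)
  have hKne : ∀ i, ((Subtype.val : X → Esp n) ⁻¹' K i).Nonempty := by
    intro i
    obtain ⟨x, hx⟩ := hne i
    exact ⟨⟨x, hrange ▸ hsub' i hx⟩, hx⟩
  set k : ℕ → NonemptyCompacts X := fun i => ⟨⟨Subtype.val ⁻¹' K i, hKc i⟩, hKne i⟩ with hk
  obtain ⟨Lk, -, ψ, hψ, hconv⟩ := isCompact_univ.tendsto_subseq (x := k) (fun i => mem_univ _)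
  set L : Set (Esp n) := Subtype.val '' (Lk : Set X) with hL
  have hdist : ∀ i, hausdorffDist (K (ψ i)) L = dist (k (ψ i)) Lk := by
    intro i
    rw [NonemptyCompacts.dist_eq, ← himg (ψ i), hL]
    exact hausdorffDist_image isometry_subtype_coe
  have hH : HConv (fun i => K (ψ i)) L := by
    unfold HConv
    have := tendsto_iff_dist_tendsto_zero.1 hconv
    simpa [hdist] using this
  have hLne : L.Nonempty := (Lk.nonempty).image _
  have hLc : IsCompact L := Lk.isCompact.image continuous_subtype_val
  have hLsub : L ⊆ sphereSet n := by
    rw [hset]; rintro x ⟨y, -, rfl⟩; exact y.2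
  exact ⟨ψ, hψ, L, hLne, hLc, hLsub, sphConvex_of_hausdorff_limit (fun i => K (ψ i))
    (fun i => hne _) (fun i => hcpt _) (fun i => hc _) L hLne hLc hH, hH⟩
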